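/- Let f = a_0 + a_1 z + ... + a_n z^n ∈ ℤ[z] be a primitive polynomial of degree n with a_0·a_n ≠ 0. Suppose there exists a positive integer m with m ≥ h_f + 2 such that |f(m)| = p_1^{k_1}···p_r^{k_r}, where p_1,…,p_r are primes which are pairwise distinct if r ≥ 2 and k_1,…,k_r are positive integers. Suppose that for each i = 1,…,r there exists a positive integer j_i ≤ n such that: (i) v_{p_i}(s_{j_i}(m)) = 0 and gcd(k_i, j_i) = 1; and (ii) if j_i > 1, then k_i/j_i < v_{p_i}(s_t(m))/(j_i − t) for each t = 1,…,j_i − 1. Then f is a product of at most r irreducible polynomials in ℤ[z]; in particular, if r = 1, then f is irreducible in ℤ[z]. -/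

import Mathlib

set_option maxHeartbeats 1000000

/-- The height `h_f = max_{0 ≤ i ≤ n-1} |a_i|/|a_n|` of a polynomial
`f = a_0 + a_1 z + ⋯ + a_n z^n` of degree `n`. -/
noncomputable def height (f : Polynomial ℤ) : ℝ :=
  ⨆ i : Fin f.natDegree, (|f.coeff i| : ℝ) / |f.coeff f.natDegree|

open Polynomial Finset


private lemma ms_one_le_prod (s : Multiset ℝ) (h : ∀ x ∈ s, 1 ≤ x) : 1 ≤ s.prod := by
  induction s using Multiset.induction with
  | empty => simp
  | cons a t ih =>
    rw [Multiset.prod_cons]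
    have ha := h a (Multiset.mem_cons_self a t)
    have ht := ih (fun x hx => h x (Multiset.mem_cons_of_mem hx))
    nlinarith

private lemma ms_one_lt_prod (s : Multiset ℝ) (hne : s ≠ 0) (h : ∀ x ∈ s, 1 < x) :
    1 < s.prod := by
  obtain ⟨a, ha⟩ := Multiset.exists_mem_of_ne_zero hne
  rw [← Multiset.prod_erase ha]
  have h1 : (1:ℝ) ≤ (s.erase a).prod :=
    ms_one_le_prod _ (fun x hx => le_of_lt (h x (Multiset.mem_of_mem_erase hx)))
  have := h a ha
  nlinarith

private lemma card_le_sum_countP {α : Type*} (s : Multiset α) (r : ℕ) (P : ℕ → α → Prop)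
    [∀ i a, Decidable (P i a)]
    (cover : ∀ a ∈ s, ∃ i, i < r ∧ P i a) :
    Multiset.card s ≤ ∑ i ∈ Finset.range r, s.countP (P i) := by
  induction s using Multiset.induction with
  | empty => simp
  | cons a t ih =>
    obtain ⟨i0, hi0r, hi0⟩ := cover a (Multiset.mem_cons_self a t)
    have h1 : Multiset.card t ≤ ∑ i ∈ Finset.range r, t.countP (P i) :=
      ih (fun x hx => cover x (Multiset.mem_cons_of_mem hx))
    have h3 : 1 ≤ ∑ i ∈ Finset.range r, (if P i a then 1 else 0) := by
      calc (1:ℕ) = if P i0 a then 1 else 0 := by simp [hi0]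
      _ ≤ _ := Finset.single_le_sum (f := fun i => if P i a then 1 else 0)
          (fun _ _ => Nat.zero_le _) (Finset.mem_range.mpr hi0r)
    calc Multiset.card (a ::ₘ t) = Multiset.card t + 1 := by rw [Multiset.card_cons]
    _ ≤ (∑ i ∈ Finset.range r, t.countP (P i)) + ∑ i ∈ Finset.range r, (if P i a then 1 else 0) := by
        omega
    _ = ∑ i ∈ Finset.range r, (t.countP (P i) + if P i a then 1 else 0) := by
        rw [Finset.sum_add_distrib]
    _ = ∑ i ∈ Finset.range r, (a ::ₘ t).countP (P i) := by
        refine Finset.sum_congr rfl (fun i _ => ?_)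
        rw [Multiset.countP_cons]




private lemma exists_min_argmin (w : ℕ → ℕ) (S : Finset ℕ) (hS : S.Nonempty) :
    ∃ μ u₀, u₀ ∈ S ∧ w u₀ = μ ∧ (∀ u ∈ S, μ ≤ w u) ∧ (∀ u ∈ S, u < u₀ → μ < w u) := by
  classical
  have hne : (S.image w).Nonempty := hS.image w
  set μ := (S.image w).min' hne with hμ
  have hμle : ∀ u ∈ S, μ ≤ w u := fun u hu => Finset.min'_le _ _ (Finset.mem_image_of_mem _ hu)
  have hMne : (S.filter (fun u => w u = μ)).Nonempty := by
    obtain ⟨u, hu, hwu⟩ := Finset.mem_image.mp ((S.image w).min'_mem hne)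
    exact ⟨u, Finset.mem_filter.mpr ⟨hu, hwu⟩⟩
  refine ⟨μ, (S.filter (fun u => w u = μ)).min' hMne, ?_, ?_, hμle, ?_⟩
  · exact (Finset.mem_filter.mp (Finset.min'_mem _ hMne)).1
  · exact (Finset.mem_filter.mp (Finset.min'_mem _ hMne)).2
  · intro u hu hlt
    rcases lt_or_eq_of_le (hμle u hu) with hl | he
    · exact hl
    · exfalso
      have : (S.filter (fun u => w u = μ)).min' hMne ≤ u :=
        Finset.min'_le (S.filter (fun u => w u = μ)) u (Finset.mem_filter.mpr ⟨hu, he.symm⟩)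
      omega

private lemma val_split (pp : ℕ) (hp : pp.Prime) (k jj : ℕ) (f g h : Polynomial ℤ) (m : ℤ)
    (hfgh : f = g * h)
    (hf0 : f.eval m ≠ 0)
    (hk : padicValInt pp (f.eval m) = k) (hkpos : 0 < k)
    (hjpos : 0 < jj)
    (hsj : ¬ ((pp : ℤ) ∣ (Polynomial.hasseDeriv jj f).eval m))
    (hgcd : Nat.gcd k jj = 1)
    (hmid : ∀ t, 1 ≤ t → t < jj →
      (Polynomial.hasseDeriv t f).eval m = 0 ∨
      k * (jj - t) < jj * padicValInt pp ((Polynomial.hasseDeriv t f).eval m)) :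
    padicValInt pp (g.eval m) = 0 ∨ padicValInt pp (h.eval m) = 0 := by
  haveI : Fact pp.Prime := ⟨hp⟩
  have hp1 : (1:ℤ) < (pp:ℤ) := by exact_mod_cast hp.one_lt
  -- valuation helpers
  have val_dvd : ∀ (x : ℤ) (c : ℕ), c ≤ padicValInt pp x → (pp:ℤ)^c ∣ x := by
    intro x c hc
    rw [padicValInt_dvd_iff]
    exact Or.inr hc
  have dvd_val : ∀ (x : ℤ) (c : ℕ), x ≠ 0 → (pp:ℤ)^c ∣ x → c ≤ padicValInt pp x := by
    intro x c hx hd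
    rcases (padicValInt_dvd_iff c x).mp hd with h0 | h0
    · exact absurd h0 hx
    · exact h0
  have val_pos : ∀ (x : ℤ), x ≠ 0 → (pp:ℤ) ∣ x → 1 ≤ padicValInt pp x := by
    intro x hx hd
    exact dvd_val x 1 hx (by simpa using hd)
  -- notation
  set G : ℕ → ℤ := fun u => (Polynomial.hasseDeriv u g).eval m with hGdef
  set H : ℕ → ℤ := fun v => (Polynomial.hasseDeriv v h).eval m with hHdef
  have hF : ∀ t, (Polynomial.hasseDeriv t f).eval m
      = ∑ ij ∈ antidiagonal t, G ij.1 * H ij.2 := by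
    intro t
    rw [hfgh, Polynomial.hasseDeriv_mul, Polynomial.eval_finset_sum]
    simp [hGdef, hHdef]
  have hG0 : G 0 = g.eval m := by simp [hGdef]
  have hH0 : H 0 = h.eval m := by simp [hHdef]
  have hgh : g.eval m * h.eval m = f.eval m := by rw [hfgh, Polynomial.eval_mul]
  have hg0 : g.eval m ≠ 0 := by
    intro h0; apply hf0; rw [← hgh, h0, zero_mul]
  have hh0 : h.eval m ≠ 0 := by
    intro h0; apply hf0; rw [← hgh, h0, mul_zero]
  set α := padicValInt pp (g.eval m) with hαdef
  set β := padicValInt pp (h.eval m) with hβdef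
  have hαβ : α + β = k := by rw [hαdef, hβdef, ← padicValInt.mul hg0 hh0, hgh, hk]
  -- the finsets
  set Sg : Finset ℕ := (Finset.range (jj+1)).filter (fun u => G u ≠ 0) with hSgdef
  set Sh : Finset ℕ := (Finset.range (jj+1)).filter (fun v => H v ≠ 0) with hShdef
  have hSg0 : 0 ∈ Sg := by
    rw [hSgdef, Finset.mem_filter]
    exact ⟨Finset.mem_range.mpr (by omega), by rw [hG0]; exact hg0⟩
  have hSh0 : 0 ∈ Sh := by
    rw [hShdef, Finset.mem_filter]
    exact ⟨Finset.mem_range.mpr (by omega), by rw [hH0]; exact hh0⟩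
  have memSg : ∀ u, u ≤ jj → G u ≠ 0 → u ∈ Sg := by
    intro u h1 h2; rw [hSgdef, Finset.mem_filter]; exact ⟨Finset.mem_range.mpr (by omega), h2⟩
  have memSh : ∀ v, v ≤ jj → H v ≠ 0 → v ∈ Sh := by
    intro v h1 h2; rw [hShdef, Finset.mem_filter]; exact ⟨Finset.mem_range.mpr (by omega), h2⟩
  set wG : ℕ → ℕ := fun u => jj * padicValInt pp (G u) + k * u with hwGdef
  set wH : ℕ → ℕ := fun v => jj * padicValInt pp (H v) + k * v with hwHdef
  -- minima
  obtain ⟨μ, u₀, hu₀Sg, hwu₀, hμle, hμlt⟩ := exists_min_argmin wG Sg ⟨0, hSg0⟩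
  obtain ⟨ν, v₀, hv₀Sh, hwv₀, hνle, hνlt⟩ := exists_min_argmin wH Sh ⟨0, hSh0⟩
  have hGu₀ : G u₀ ≠ 0 := (Finset.mem_filter.mp hu₀Sg).2
  have hHv₀ : H v₀ ≠ 0 := (Finset.mem_filter.mp hv₀Sh).2
  have hu₀le : u₀ ≤ jj := by
    have := Finset.mem_range.mp (Finset.mem_filter.mp hu₀Sg).1; omega
  have hv₀le : v₀ ≤ jj := by
    have := Finset.mem_range.mp (Finset.mem_filter.mp hv₀Sh).1; omega
  clear_value G H wG wH Sg Sh α β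
  -- Step 2 : the pair on the antidiagonal of jj with zero valuations
  have hFjj : ¬ ((pp:ℤ) ∣ ∑ ij ∈ antidiagonal jj, G ij.1 * H ij.2) := by
    rw [← hF]; exact hsj
  have hpair : ∃ ij ∈ antidiagonal jj, ¬ ((pp:ℤ) ∣ G ij.1 * H ij.2) := by
    by_contra hcon
    push_neg at hcon
    exact hFjj (Finset.dvd_sum hcon)
  obtain ⟨⟨us, vs⟩, hmemus, hnd⟩ := hpair
  have husvs : us + vs = jj := Finset.HasAntidiagonal.mem_antidiagonal.mp hmemus
  have hGus : G us ≠ 0 := by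
    intro h0; apply hnd; rw [h0, zero_mul]; exact dvd_zero _
  have hHvs : H vs ≠ 0 := by
    intro h0; apply hnd; rw [h0, mul_zero]; exact dvd_zero _
  have hvGus : padicValInt pp (G us) = 0 := by
    apply padicValInt.eq_zero_of_not_dvd
    intro hd; exact hnd (hd.mul_right _)
  have hvHvs : padicValInt pp (H vs) = 0 := by
    apply padicValInt.eq_zero_of_not_dvd
    intro hd; exact hnd (hd.mul_left _)
  have hμus : μ ≤ k * us := by
    have := hμle us (memSg us (by omega) hGus)
    rw [hwGdef] at this; simp only at this
    rw [hvGus] at this; omega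
  have hνvs : ν ≤ k * vs := by
    have := hνle vs (memSh vs (by omega) hHvs)
    rw [hwHdef] at this; simp only at this
    rw [hvHvs] at this; omega
  have hμν_le : μ + ν ≤ k * jj := by
    have : k * us + k * vs = k * jj := by rw [← Nat.mul_add, husvs]
    omega
  -- t₀ ≤ jj
  have hμu₀ : k * u₀ ≤ μ := by rw [← hwu₀, hwGdef]; simp only; omega
  have hνv₀ : k * v₀ ≤ ν := by rw [← hwv₀, hwHdef]; simp only; omega
  have ht₀le : u₀ + v₀ ≤ jj := by
    by_contra hcon
    push_neg at hcon
    have h1 : k * jj < k * (u₀ + v₀) := by nlinarith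
    have h2 : k * (u₀ + v₀) = k * u₀ + k * v₀ := by ring
    omega
  set t₀ := u₀ + v₀ with ht₀def
  set c := padicValInt pp (G u₀) + padicValInt pp (H v₀) with hcdef
  have hcterm : padicValInt pp (G u₀ * H v₀) = c := padicValInt.mul hGu₀ hHv₀
  -- claims about terms on antidiagonal t₀
  have claimB : ∀ ij ∈ antidiagonal t₀, (pp:ℤ)^c ∣ G ij.1 * H ij.2 := by
    rintro ⟨u, v⟩ hmem
    have huv : u + v = t₀ := Finset.HasAntidiagonal.mem_antidiagonal.mp hmem
    by_cases hGu : G u = 0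
    · simp [hGu]
    by_cases hHv : H v = 0
    · simp [hHv]
    have huSg : u ∈ Sg := memSg u (by omega) hGu
    have hvSh : v ∈ Sh := memSh v (by omega) hHv
    have h1 : μ ≤ jj * padicValInt pp (G u) + k * u := by
      have := hμle u huSg; rwa [hwGdef] at this
    have h2 : ν ≤ jj * padicValInt pp (H v) + k * v := by
      have := hνle v hvSh; rwa [hwHdef] at this
    have h3 : jj * c + k * t₀ = μ + ν := by
      rw [← hwu₀, ← hwv₀, hwGdef, hwHdef]; simp only
      rw [hcdef, ht₀def]; ring
    have h6 : k * u + k * v = k * t₀ := by rw [← Nat.mul_add, huv]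
    have h4 : jj * c ≤ jj * (padicValInt pp (G u) + padicValInt pp (H v)) := by
      have : jj * (padicValInt pp (G u) + padicValInt pp (H v))
          = jj * padicValInt pp (G u) + jj * padicValInt pp (H v) := by ring
      omega
    have h5 : c ≤ padicValInt pp (G u) + padicValInt pp (H v) :=
      Nat.le_of_mul_le_mul_left h4 hjpos
    exact val_dvd _ c (by rw [padicValInt.mul hGu hHv]; exact h5)
  have claimA : ∀ ij ∈ antidiagonal t₀, ij ≠ (u₀, v₀) → (pp:ℤ)^(c+1) ∣ G ij.1 * H ij.2 := by
    rintro ⟨u, v⟩ hmem hne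
    have huv : u + v = t₀ := Finset.HasAntidiagonal.mem_antidiagonal.mp hmem
    by_cases hGu : G u = 0
    · simp [hGu]
    by_cases hHv : H v = 0
    · simp [hHv]
    have huSg : u ∈ Sg := memSg u (by omega) hGu
    have hvSh : v ∈ Sh := memSh v (by omega) hHv
    have h3 : jj * c + k * t₀ = μ + ν := by
      rw [← hwu₀, ← hwv₀, hwGdef, hwHdef]; simp only
      rw [hcdef, ht₀def]; ring
    have hkey : μ + ν < wG u + wH v := by
      rcases Nat.lt_trichotomy u u₀ with hlt | heq | hgt
      · have := hμlt u huSg hlt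
        have := hνle v hvSh
        omega
      · exfalso; apply hne
        have : v = v₀ := by omega
        rw [heq, this]
      · have hvlt : v < v₀ := by omega
        have := hνlt v hvSh hvlt
        have := hμle u huSg
        omega
    have h6 : k * u + k * v = k * t₀ := by rw [← Nat.mul_add, huv]
    have h4 : jj * c < jj * (padicValInt pp (G u) + padicValInt pp (H v)) := by
      have he : wG u + wH v
          = (jj * padicValInt pp (G u) + k * u) + (jj * padicValInt pp (H v) + k * v) := by
        rw [hwGdef, hwHdef]
      have he2 : jj * (padicValInt pp (G u) + padicValInt pp (H v))
          = jj * padicValInt pp (G u) + jj * padicValInt pp (H v) := by ring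
      omega
    have h5 : c < padicValInt pp (G u) + padicValInt pp (H v) :=
      Nat.lt_of_mul_lt_mul_left h4
    exact val_dvd _ (c+1) (by rw [padicValInt.mul hGu hHv]; omega)
  -- the valuation of F t₀ equals c
  have hu₀v₀mem : (u₀, v₀) ∈ antidiagonal t₀ := Finset.HasAntidiagonal.mem_antidiagonal.mpr rfl
  have hsplitsum : (Polynomial.hasseDeriv t₀ f).eval m
      = G u₀ * H v₀ + ∑ ij ∈ (antidiagonal t₀).erase (u₀, v₀), G ij.1 * H ij.2 := by
    rw [hF t₀]
    exact (Finset.add_sum_erase _ (fun ij => G ij.1 * H ij.2) (a := (u₀, v₀)) hu₀v₀mem).symm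
  have hndvd : ¬ ((pp:ℤ)^(c+1) ∣ (Polynomial.hasseDeriv t₀ f).eval m) := by
    intro hd
    have hrest : (pp:ℤ)^(c+1) ∣ ∑ ij ∈ (antidiagonal t₀).erase (u₀, v₀), G ij.1 * H ij.2 :=
      Finset.dvd_sum (fun ij hij => claimA ij (Finset.mem_of_mem_erase hij)
        (Finset.ne_of_mem_erase hij))
    have hterm : (pp:ℤ)^(c+1) ∣ G u₀ * H v₀ := by
      have := dvd_sub hd hrest
      rw [hsplitsum] at this
      simpa using this
    have := dvd_val _ (c+1) (mul_ne_zero hGu₀ hHv₀) hterm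
    rw [hcterm] at this
    omega
  have hFt₀ne : (Polynomial.hasseDeriv t₀ f).eval m ≠ 0 := by
    intro h0; apply hndvd; rw [h0]; exact dvd_zero _
  have hvalF : padicValInt pp ((Polynomial.hasseDeriv t₀ f).eval m) = c := by
    have hle1 : c ≤ padicValInt pp ((Polynomial.hasseDeriv t₀ f).eval m) := by
      apply dvd_val _ _ hFt₀ne
      rw [hF t₀]
      exact Finset.dvd_sum claimB
    have hle2 : padicValInt pp ((Polynomial.hasseDeriv t₀ f).eval m) < c + 1 := by
      by_contra hcon
      push_neg at hcon
      exact hndvd (val_dvd _ _ hcon)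
    omega
  have hμν_eq : μ + ν = jj * c + k * t₀ := by
    rw [← hwu₀, ← hwv₀, hwGdef, hwHdef]; simp only
    rw [hcdef, ht₀def]; ring
  -- case analysis on t₀
  have hμν : μ + ν = k * jj := by
    rcases Nat.eq_zero_or_pos t₀ with ht0 | ht0pos
    · -- t₀ = 0 : c = k
      have hu0 : u₀ = 0 := by omega
      have hv0 : v₀ = 0 := by omega
      have hck : c = k := by
        rw [hcdef, hu0, hv0, hG0, hH0, ← hαdef, ← hβdef, hαβ]
      rw [hμν_eq, hck, ht0]
      ring
    rcases Nat.lt_or_ge t₀ jj with htlt | htge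
    · -- 0 < t₀ < jj : contradiction
      exfalso
      rcases hmid t₀ ht0pos htlt with h0 | hineq
      · exact hFt₀ne h0
      · rw [hvalF] at hineq
        have he : k * (jj - t₀) + k * t₀ = k * jj := by
          rw [← Nat.mul_add]; congr 1; omega
        omega
    · -- t₀ = jj : c = 0
      have htjj : t₀ = jj := by omega
      have hc0 : c = 0 := by
        rw [← hvalF]
        apply padicValInt.eq_zero_of_not_dvd
        rw [htjj]
        exact hsj
      rw [hμν_eq, hc0, htjj]
      ring
  -- conclude
  have hμα : μ ≤ jj * α := by
    have := hμle 0 hSg0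
    rw [hwGdef] at this; simp only at this
    rw [hG0, ← hαdef] at this
    omega
  have hνβ : ν ≤ jj * β := by
    have := hνle 0 hSh0
    rw [hwHdef] at this; simp only at this
    rw [hH0, ← hβdef] at this
    omega
  have hsum : jj * α + jj * β = k * jj := by
    rw [← Nat.mul_add, hαβ]; ring
  have hμαeq : μ = jj * α := by omega
  have hνβeq : ν = jj * β := by omega
  have hsum2 : k * us + k * vs = k * jj := by rw [← Nat.mul_add, husvs]
  have hus_eq : jj * α = k * us := by omega
  have hvs_eq : jj * β = k * vs := by omega
  have hjdvd : jj ∣ us := by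
    have h1 : jj ∣ k * us := ⟨α, hus_eq.symm⟩
    have hco : Nat.Coprime jj k := Nat.coprime_comm.mp hgcd
    exact Nat.Coprime.dvd_of_dvd_mul_left hco h1
  rcases Nat.eq_zero_or_pos us with hus0 | huspos
  · left
    have : jj * α = 0 := by rw [hus_eq, hus0]; ring
    rcases Nat.mul_eq_zero.mp this with h0 | h0 <;> omega
  · right
    have : jj ≤ us := Nat.le_of_dvd huspos hjdvd
    have hvs0 : vs = 0 := by omega
    have : jj * β = 0 := by rw [hvs_eq, hvs0]; ring
    rcases Nat.mul_eq_zero.mp this with h0 | h0 <;> omega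

private lemma eval_two_le
    (f : Polynomial ℤ) (n : ℕ) (hdeg : f.natDegree = n) (hn : 0 < n)
    (h0 : f.coeff 0 ≠ 0) (hnc : f.coeff n ≠ 0)
    (m : ℕ) (hmh : height f + 2 ≤ (m : ℝ))
    (g : Polynomial ℤ) (hgf : g ∣ f) (hg : 0 < g.natDegree) :
    2 ≤ (g.eval (m : ℤ)).natAbs := by
  set hh := height f with hhdef
  have hf0 : f ≠ 0 := fun h => hnc (by simp [h])
  -- coefficient bounds
  have hanpos : (0:ℝ) < ((|f.coeff n| : ℤ) : ℝ) := by
    have : (0:ℤ) < |f.coeff n| := abs_pos.mpr hnc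
    exact_mod_cast this
  have hb : ∀ i : Fin f.natDegree, (|f.coeff (i : ℕ)| : ℝ) / |f.coeff f.natDegree| ≤ hh := by
    intro i
    rw [hhdef, height]
    exact le_ciSup (Finite.bddAbove_range
      (fun i : Fin f.natDegree => (|f.coeff (i : ℕ)| : ℝ) / |f.coeff f.natDegree|)) i
  have hcoeff : ∀ i < n, ((|f.coeff i| : ℤ) : ℝ) ≤ hh * ((|f.coeff n| : ℤ) : ℝ) := by
    intro i hi
    have h1 := hb ⟨i, by omega⟩
    have e : f.coeff f.natDegree = f.coeff n := by rw [hdeg]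
    rw [e] at h1
    have h2 := (div_le_iff₀ hanpos).mp h1
    push_cast at h2 ⊢
    exact h2
  have hhpos : 0 < hh := by
    have h1 := hcoeff 0 hn
    have h2 : (0:ℝ) < ((|f.coeff 0| : ℤ) : ℝ) := by
      have : (0:ℤ) < |f.coeff 0| := abs_pos.mpr h0
      exact_mod_cast this
    nlinarith
  -- complex setting
  set φ := Int.castRingHom ℂ with hφdef
  set F := f.map φ with hFdef
  set G := g.map φ with hGdef
  have hFne : F ≠ 0 := by
    rw [hFdef]
    simpa [Polynomial.map_eq_zero_iff (RingHom.injective_int φ)] using hf0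
  have hFdeg : F.natDegree = n := by
    rw [hFdef, Polynomial.natDegree_map_eq_of_injective (RingHom.injective_int φ), hdeg]
  have habs : ∀ i, ‖F.coeff i‖ = ((|f.coeff i| : ℤ) : ℝ) := by
    intro i
    rw [hFdef, Polynomial.coeff_map]
    simp [Complex.norm_intCast]
  -- all roots of F are far from m
  have hroot : ∀ z : ℂ, F.IsRoot z → 1 < ‖(m : ℂ) - z‖ := by
    intro z hz
    have htri : (m : ℝ) - ‖z‖ ≤ ‖(m : ℂ) - z‖ := by
      have h1 := norm_add_le ((m : ℂ) - z) z
      simp only [sub_add_cancel] at h1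
      have h2 : ‖((m : ℕ) : ℂ)‖ = (m : ℝ) := by
        rw [Complex.norm_natCast]
      linarith [h1, h2.le, h2.ge]
    rcases le_or_gt (‖z‖) 1 with hz1 | hz1
    · have : (1:ℝ) + hh ≤ (m : ℝ) - ‖z‖ := by linarith
      linarith
    · -- Cauchy bound : abs z < 1 + hh
      have hzbound : ‖z‖ - 1 < hh := by
        have heval : F.eval z = 0 := hz
        rw [Polynomial.eval_eq_sum_range, hFdeg] at heval
        have hsplit : F.coeff n * z ^ n = -∑ i ∈ Finset.range n, F.coeff i * z ^ i := by
          rw [Finset.sum_range_succ] at heval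
          linear_combination heval
        have habs1 : ‖F.coeff n‖ * ‖z‖ ^ n
            ≤ ∑ i ∈ Finset.range n, ‖F.coeff i‖ * ‖z‖ ^ i := by
          calc ‖F.coeff n‖ * ‖z‖ ^ n
              = ‖F.coeff n * z ^ n‖ := by rw [norm_mul, norm_pow]
          _ = ‖∑ i ∈ Finset.range n, F.coeff i * z ^ i‖ := by rw [hsplit, norm_neg]
          _ ≤ ∑ i ∈ Finset.range n, ‖F.coeff i * z ^ i‖ :=
              norm_sum_le _ _
          _ = ∑ i ∈ Finset.range n, ‖F.coeff i‖ * ‖z‖ ^ i := by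
              refine Finset.sum_congr rfl fun i _ => ?_
              rw [norm_mul, norm_pow]
        have habs2 : ∑ i ∈ Finset.range n, ‖F.coeff i‖ * ‖z‖ ^ i
            ≤ hh * ((|f.coeff n| : ℤ) : ℝ) * ∑ i ∈ Finset.range n, ‖z‖ ^ i := by
          rw [Finset.mul_sum]
          refine Finset.sum_le_sum fun i hi => ?_
          have h1 := hcoeff i (Finset.mem_range.mp hi)
          rw [habs i]
          have h2 : (0:ℝ) ≤ ‖z‖ ^ i := pow_nonneg (norm_nonneg z) i
          nlinarith
        have hgeom : ∑ i ∈ Finset.range n, ‖z‖ ^ i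
            = (‖z‖ ^ n - 1) / (‖z‖ - 1) := geom_sum_eq (by linarith) n
        have hzn : (0:ℝ) < ‖z‖ ^ n := pow_pos (by linarith) n
        have hd : (0:ℝ) < ‖z‖ - 1 := by linarith
        have hfin : ((|f.coeff n| : ℤ) : ℝ) * ‖z‖ ^ n * (‖z‖ - 1)
            ≤ hh * ((|f.coeff n| : ℤ) : ℝ) * (‖z‖ ^ n - 1) := by
          have hle := habs1.trans habs2
          rw [hgeom, habs n] at hle
          rw [mul_div_assoc'] at hle
          exact (le_div_iff₀ hd).mp hle
        by_contra hcon
        push_neg at hcon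
        nlinarith [mul_pos hhpos hanpos, hzn, hanpos,
          mul_pos (mul_pos hanpos hzn) hd]
      have : (m : ℝ) - ‖z‖ > 1 := by linarith
      linarith
  -- now evaluate g
  have hgne : g ≠ 0 := by
    intro h
    rw [h] at hg
    simp at hg
  have hGne : G ≠ 0 := by
    rw [hGdef]
    simpa [Polynomial.map_eq_zero_iff (RingHom.injective_int φ)] using hgne
  have hGdeg : G.natDegree = g.natDegree := by
    rw [hGdef, Polynomial.natDegree_map_eq_of_injective (RingHom.injective_int φ)]
  have hGsplits : G.Splits := IsAlgClosed.splits G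
  have hcard : G.roots.card = g.natDegree := by
    rw [← hGdeg]
    exact (Polynomial.splits_iff_card_roots.mp hGsplits)
  have heval : G.eval ((m : ℤ) : ℂ) = G.leadingCoeff * (G.roots.map fun a => ((m : ℤ) : ℂ) - a).prod :=
    hGsplits.eval_eq_prod_roots _
  have hGroots : ∀ z ∈ G.roots, 1 < ‖(m : ℂ) - z‖ := by
    intro z hz
    have hzr : G.IsRoot z := (Polynomial.mem_roots hGne).mp hz
    have hFz : F.IsRoot z := hzr.dvd (Polynomial.map_dvd φ hgf)
    exact hroot z hFz
  have hlc : 1 ≤ ‖G.leadingCoeff‖ := by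
    have : G.leadingCoeff = φ (g.leadingCoeff) := by
      rw [hGdef, Polynomial.leadingCoeff_map_of_injective (RingHom.injective_int φ)]
    rw [this]
    have hglc : g.leadingCoeff ≠ 0 := Polynomial.leadingCoeff_ne_zero.mpr hgne
    have : ‖φ (g.leadingCoeff)‖ = ((|g.leadingCoeff| : ℤ) : ℝ) := by
      simp [hφdef, Complex.norm_intCast]
    rw [this]
    exact_mod_cast Int.one_le_abs hglc
  have habsprod : ‖(G.roots.map fun a => ((m : ℤ) : ℂ) - a).prod‖
      = ((G.roots.map fun a => ((m : ℤ) : ℂ) - a).map (fun x : ℂ => ‖x‖)).prod := by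
    exact map_multiset_prod (normHom : ℂ →*₀ ℝ) _
  have hprodlt : 1 < ((G.roots.map fun a => ((m : ℤ) : ℂ) - a).map (fun x : ℂ => ‖x‖)).prod := by
    apply ms_one_lt_prod
    · intro hcon
      rw [Multiset.map_eq_zero, Multiset.map_eq_zero] at hcon
      rw [hcon] at hcard
      simp at hcard
      omega
    · intro x hx
      rw [Multiset.mem_map] at hx
      obtain ⟨y, hy, rfl⟩ := hx
      rw [Multiset.mem_map] at hy
      obtain ⟨z, hz, rfl⟩ := hy
      have := hGroots z hz
      have hcast : ((m : ℤ) : ℂ) = (m : ℂ) := by push_cast; ring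
      rw [hcast]
      exact this
  have hfinal : 1 < ‖G.eval ((m : ℤ) : ℂ)‖ := by
    rw [heval, norm_mul, habsprod]
    nlinarith
  have hevalcast : G.eval ((m : ℤ) : ℂ) = ((g.eval (m : ℤ) : ℤ) : ℂ) := by
    rw [hGdef, Polynomial.eval_map]
    exact Polynomial.eval₂_at_apply φ (m : ℤ)
  rw [hevalcast] at hfinal
  have : ‖((g.eval (m : ℤ) : ℤ) : ℂ)‖ = (((g.eval (m : ℤ)).natAbs : ℕ) : ℝ) := by
    rw [Complex.norm_intCast, Nat.cast_natAbs]
    exact Int.cast_abs.symm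
  rw [this] at hfinal
  exact_mod_cast hfinal

/-- Theorem 1: if `f` is primitive of degree `n`, `a_0 a_n ≠ 0`, `m ≥ h_f + 2` is a
positive integer with `|f(m)| = p_1^{k_1} ⋯ p_r^{k_r}` for pairwise distinct primes
`p_i`, and for each `i` there is `1 ≤ j_i ≤ n` with `v_{p_i}(s_{j_i}(m)) = 0`,
`gcd(k_i, j_i) = 1`, and (if `j_i > 1`) `k_i/j_i < v_{p_i}(s_t(m))/(j_i - t)` for
`t = 1, …, j_i - 1` (where `s_t = f^{(t)}/t!` and `v_p(0) = ∞`), then `f` is a product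
of at most `r` irreducible polynomials in `ℤ[z]`; in particular if `r = 1` then `f`
is irreducible. -/
theorem statement0
    (f : Polynomial ℤ) (n : ℕ) (hdeg : f.natDegree = n)
    (ha : f.coeff 0 * f.coeff n ≠ 0) (hprim : f.IsPrimitive)
    (m : ℕ) (hm : 0 < m) (hmh : height f + 2 ≤ (m : ℝ))
    (r : ℕ) (hr : 0 < r)
    (p k j : ℕ → ℕ)
    (hp : ∀ i < r, Nat.Prime (p i))
    (hk : ∀ i < r, 0 < k i)
    (hpdist : ∀ i < r, ∀ i' < r, i ≠ i' → p i ≠ p i')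
    (hfm : (f.eval (m : ℤ)).natAbs = ∏ i ∈ Finset.range r, p i ^ k i)
    (hj : ∀ i < r, 0 < j i ∧ j i ≤ n)
    (hcond1 : ∀ i < r,
      ¬ ((p i : ℤ) ∣ (Polynomial.hasseDeriv (j i) f).eval (m : ℤ)) ∧
      Nat.gcd (k i) (j i) = 1)
    (hcond2 : ∀ i < r, 1 < j i → ∀ t, 1 ≤ t → t ≤ j i - 1 →
      (Polynomial.hasseDeriv t f).eval (m : ℤ) = 0 ∨
      (k i : ℚ) / (j i : ℚ) <
        (padicValInt (p i) ((Polynomial.hasseDeriv t f).eval (m : ℤ)) : ℚ) /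
          ((j i : ℚ) - (t : ℚ))) :
    (∃ (N : ℕ) (u : ℤˣ) (gs : Multiset (Polynomial ℤ)),
      N ≤ r ∧ Multiset.card gs = N ∧
      (∀ g ∈ gs, 0 < g.natDegree ∧ Irreducible g) ∧
      f = Polynomial.C (u : ℤ) * gs.prod) ∧
    (r = 1 → Irreducible f) := by
  classical
  have hn : 0 < n := lt_of_lt_of_le (hj 0 hr).1 (hj 0 hr).2
  have ha0 : f.coeff 0 ≠ 0 := fun h => ha (by rw [h, zero_mul])
  have han : f.coeff n ≠ 0 := fun h => ha (by rw [h, mul_zero])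
  have hprodpos : 0 < ∏ i ∈ Finset.range r, p i ^ k i := by
    apply Finset.prod_pos
    intro i hi
    exact pow_pos (hp i (Finset.mem_range.mp hi)).pos _
  have hfev : f.eval (m : ℤ) ≠ 0 := by
    intro h
    rw [h] at hfm
    simp at hfm
    omega
  have hf0 : f ≠ 0 := fun h => hfev (by rw [h]; simp)
  -- factorization into irreducibles
  obtain ⟨u, hu⟩ := UniqueFactorizationMonoid.factors_prod hf0
  set gs := UniqueFactorizationMonoid.factors f with hgsdef
  obtain ⟨cu, hcu_unit, hcu⟩ := Polynomial.isUnit_iff.mp u.isUnit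
  set uz : ℤˣ := hcu_unit.unit with huzdef
  have hcuz : (uz : ℤ) = cu := rfl
  have hful : f = Polynomial.C (uz : ℤ) * gs.prod := by
    rw [hcuz, hcu, ← hu]
    ring
  have hmem_irr : ∀ g ∈ gs, Irreducible g := fun g hg =>
    UniqueFactorizationMonoid.irreducible_of_factor g hg
  have hprod_dvd : gs.prod ∣ f := ⟨(u : Polynomial ℤ), hu.symm⟩
  have hmem_dvd : ∀ g ∈ gs, g ∣ f := fun g hg => (Multiset.dvd_prod hg).trans hprod_dvd
  have hmem_deg : ∀ g ∈ gs, 0 < g.natDegree := by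
    intro g hg
    by_contra hcon
    push_neg at hcon
    have hdeg0 : g.natDegree = 0 := by omega
    have hgC : g = Polynomial.C (g.coeff 0) :=
      Polynomial.eq_C_coeff_zero_iff_natDegree_eq_zero.mpr hdeg0
    have hCd : Polynomial.C (g.coeff 0) ∣ f := hgC ▸ hmem_dvd g hg
    have hun : IsUnit (g.coeff 0) := hprim (g.coeff 0) hCd
    exact (hmem_irr g hg).not_isUnit (by rw [hgC]; exact Polynomial.isUnit_C.mpr hun)
  have hmem_evdvd : ∀ g ∈ gs, g.eval (m : ℤ) ∣ f.eval (m : ℤ) := by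
    intro g hg
    obtain ⟨q, hq⟩ := hmem_dvd g hg
    exact ⟨q.eval (m : ℤ), by rw [hq, Polynomial.eval_mul]⟩
  -- the p-adic valuation of f(m)
  have hvalf : ∀ i < r, padicValInt (p i) (f.eval (m : ℤ)) = k i := by
    intro i hi
    haveI : Fact (p i).Prime := ⟨hp i hi⟩
    rw [padicValInt, hfm]
    rw [← Finset.mul_prod_erase _ _ (Finset.mem_range.mpr hi)]
    have h1 : p i ^ k i ≠ 0 := pow_ne_zero _ (hp i hi).pos.ne'
    have h2 : ∏ i' ∈ (Finset.range r).erase i, p i' ^ k i' ≠ 0 := by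
      apply Finset.prod_ne_zero_iff.mpr
      intro i' hi'
      exact pow_ne_zero _ (hp i' (Finset.mem_range.mp (Finset.mem_of_mem_erase hi'))).pos.ne'
    rw [padicValNat.mul h1 h2, padicValNat.prime_pow]
    have h3 : padicValNat (p i) (∏ i' ∈ (Finset.range r).erase i, p i' ^ k i') = 0 := by
      apply padicValNat.eq_zero_of_not_dvd
      intro hdvd
      obtain ⟨i', hi', hdvd'⟩ := (Nat.Prime.prime (hp i hi)).exists_mem_finset_dvd hdvd
      have hi'r : i' < r := Finset.mem_range.mp (Finset.mem_of_mem_erase hi')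
      have hpp : p i ∣ p i' := (hp i hi).dvd_of_dvd_pow hdvd'
      have : p i = p i' := (Nat.prime_dvd_prime_iff_eq (hp i hi) (hp i' hi'r)).mp hpp
      exact hpdist i hi i' hi'r (Ne.symm (Finset.ne_of_mem_erase hi')) this
    omega
  -- positive valuation from divisibility
  have hvp : ∀ i < r, ∀ x : ℤ, x ≠ 0 → ((p i : ℤ) ∣ x) → padicValInt (p i) x ≠ 0 := by
    intro i hi x hx hd h0
    haveI : Fact (p i).Prime := ⟨hp i hi⟩
    rcases (padicValInt_dvd_iff 1 x).mp (by simpa using hd) with h | h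
    · exact hx h
    · omega
  -- each prime can divide at most one factor's value
  have hcount1 : ∀ i < r, gs.countP (fun g => (p i : ℤ) ∣ g.eval (m : ℤ)) ≤ 1 := by
    intro i hi
    by_contra hcon
    push_neg at hcon
    rw [Multiset.countP_eq_card_filter] at hcon
    set t := gs.filter (fun g => (p i : ℤ) ∣ g.eval (m : ℤ)) with htdef
    obtain ⟨g, hgt⟩ := Multiset.card_pos_iff_exists_mem.mp (show 0 < Multiset.card t by omega)
    have hcarde : 1 ≤ Multiset.card (t.erase g) := by
      rw [Multiset.card_erase_of_mem hgt]
      exact Nat.le_pred_of_lt hcon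
    obtain ⟨g', hg't⟩ := Multiset.card_pos_iff_exists_mem.mp
      (show 0 < Multiset.card (t.erase g) by omega)
    have hgt2 : g ∈ gs.filter (fun g => (p i : ℤ) ∣ g.eval (m : ℤ)) := htdef ▸ hgt
    have hggs : g ∈ gs := Multiset.mem_of_mem_filter hgt2
    have hPg : (p i : ℤ) ∣ g.eval (m : ℤ) := (Multiset.mem_filter.mp hgt2).2
    have hg'f : g' ∈ gs.filter (fun g => (p i : ℤ) ∣ g.eval (m : ℤ)) :=
      htdef ▸ Multiset.mem_of_mem_erase hg't
    have hPg' : (p i : ℤ) ∣ g'.eval (m : ℤ) := (Multiset.mem_filter.mp hg'f).2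
    have hg'gse : g' ∈ gs.erase g :=
      Multiset.mem_of_le (Multiset.erase_le_erase g (Multiset.filter_le _ gs)) hg't
    -- split f = g * h
    set hh : Polynomial ℤ := Polynomial.C (uz : ℤ) * (gs.erase g).prod with hhdef
    have hfact : f = g * hh := by
      rw [hful, hhdef, ← Multiset.prod_erase hggs]
      ring
    have hfevgh : (g * hh).eval (m : ℤ) ≠ 0 := by rw [← hfact]; exact hfev
    have hgev0 : g.eval (m : ℤ) ≠ 0 := by
      intro h0
      apply hfevgh
      rw [Polynomial.eval_mul, h0, zero_mul]
    have hhev0 : hh.eval (m : ℤ) ≠ 0 := by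
      intro h0
      apply hfevgh
      rw [Polynomial.eval_mul, h0, mul_zero]
    have hg'hh : g'.eval (m : ℤ) ∣ hh.eval (m : ℤ) := by
      have h1 : g' ∣ (gs.erase g).prod := Multiset.dvd_prod hg'gse
      have h2 : (gs.erase g).prod ∣ hh := Dvd.intro_left _ rfl
      obtain ⟨q, hq⟩ := h1.trans h2
      exact ⟨q.eval (m : ℤ), by rw [hq, Polynomial.eval_mul]⟩
    have hPhh : (p i : ℤ) ∣ hh.eval (m : ℤ) := hPg'.trans hg'hh
    -- the middle condition
    have hmid : ∀ t', 1 ≤ t' → t' < j i →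
        (Polynomial.hasseDeriv t' f).eval (m : ℤ) = 0 ∨
        k i * (j i - t') < j i * padicValInt (p i) ((Polynomial.hasseDeriv t' f).eval (m : ℤ)) := by
      intro t' ht1 ht2
      have hj1 : 1 < j i := by omega
      rcases hcond2 i hi hj1 t' ht1 (by omega) with h | h
      · exact Or.inl h
      · right
        have hjq : (0:ℚ) < (j i : ℚ) := by exact_mod_cast (hj i hi).1
        have htq : (t' : ℚ) < (j i : ℚ) := by exact_mod_cast ht2
        have hdq : (0:ℚ) < (j i : ℚ) - (t' : ℚ) := by linarith
        rw [div_lt_div_iff₀ hjq hdq] at h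
        have hcast : ((j i - t' : ℕ) : ℚ) = (j i : ℚ) - (t' : ℚ) := by
          rw [Nat.cast_sub (le_of_lt ht2)]
        have hfin : ((k i * (j i - t') : ℕ) : ℚ)
            < ((j i * padicValInt (p i) ((Polynomial.hasseDeriv t' f).eval (m : ℤ)) : ℕ) : ℚ) := by
          push_cast [hcast]
          push_cast at h
          linarith
        exact_mod_cast hfin
    rcases val_split (p i) (hp i hi) (k i) (j i) f g hh (m : ℤ) hfact hfev (hvalf i hi)
        (hk i hi) (hj i hi).1 (hcond1 i hi).1 (hcond1 i hi).2 hmid with h0 | h0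
    · exact hvp i hi _ hgev0 hPg h0
    · exact hvp i hi _ hhev0 hPhh h0
  -- every factor is divisible by at least one p i
  have hcover : ∀ g ∈ gs, ∃ i, i < r ∧ (p i : ℤ) ∣ g.eval (m : ℤ) := by
    intro g hg
    have h2 := eval_two_le f n hdeg hn ha0 han m hmh g (hmem_dvd g hg) (hmem_deg g hg)
    have hdvd : (g.eval (m : ℤ)).natAbs ∣ (f.eval (m : ℤ)).natAbs :=
      Int.natAbs_dvd_natAbs.mpr (hmem_evdvd g hg)
    rw [hfm] at hdvd
    obtain ⟨q, hqprime, hq⟩ := Nat.exists_prime_and_dvd (by omega : (g.eval (m : ℤ)).natAbs ≠ 1)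
    have hq2 : q ∣ ∏ i ∈ Finset.range r, p i ^ k i := hq.trans hdvd
    obtain ⟨i, hi, hd⟩ := hqprime.prime.exists_mem_finset_dvd hq2
    have hir : i < r := Finset.mem_range.mp hi
    have hqp : q = p i :=
      (Nat.prime_dvd_prime_iff_eq hqprime (hp i hir)).mp (hqprime.dvd_of_dvd_pow hd)
    refine ⟨i, hir, ?_⟩
    rw [← hqp]
    have h3 : (q : ℤ) ∣ ((g.eval (m : ℤ)).natAbs : ℤ) := Int.natCast_dvd_natCast.mpr hq
    exact h3.trans (Int.natAbs_dvd.mpr dvd_rfl)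
  -- count the factors
  have hNle : Multiset.card gs ≤ r := by
    calc Multiset.card gs
        ≤ ∑ i ∈ Finset.range r, gs.countP (fun g => (p i : ℤ) ∣ g.eval (m : ℤ)) :=
          card_le_sum_countP gs r _ hcover
    _ ≤ ∑ i ∈ Finset.range r, 1 :=
          Finset.sum_le_sum fun i hi => hcount1 i (Finset.mem_range.mp hi)
    _ = r := by simp
  refine ⟨⟨Multiset.card gs, uz, gs, hNle, rfl,
    fun g hg => ⟨hmem_deg g hg, hmem_irr g hg⟩, hful⟩, ?_⟩
  -- the case r = 1
  intro hr1
  subst hr1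
  have hle1 : Multiset.card gs ≤ 1 := hNle
  rcases Nat.lt_or_ge (Multiset.card gs) 1 with hc0 | hc1
  · exfalso
    have hgs0 : gs = 0 := Multiset.card_eq_zero.mp (by omega)
    rw [hgs0] at hful
    simp at hful
    have : f.natDegree = 0 := by rw [hful]; exact Polynomial.natDegree_C _
    omega
  · have hcard1 : Multiset.card gs = 1 := by omega
    obtain ⟨g, hgs1⟩ := Multiset.card_eq_one.mp hcard1
    have hgmem : g ∈ gs := by rw [hgs1]; exact Multiset.mem_singleton_self g
    have hassoc : Associated g f := by
      rw [hful, hgs1, Multiset.prod_singleton]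
      exact ⟨(Polynomial.isUnit_C.mpr uz.isUnit).unit, by rw [IsUnit.unit_spec]; ring⟩
    exact hassoc.irreducible (hmem_irr g hgmem)
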